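/- Let n_x ≥ 1 and m ≥ 1 be natural numbers and set N = n_x·m. Let Ω be a finite probability space of N equally likely points partitioned into n_x bins of m points each, let X: Ω → {1,...,n_x} map each point to its bin index, and let Z: Ω → {0,1} be such that bin i contains exactly h_i points with Z = 1 (0 ≤ h_i ≤ m). Set S = Σ_{i=1}^{n_x} h_i and assume 0 < S < N. Then Var(E[Z | X]) / Var(Z) = (n_x / (S(N - S))) · Σ_{i=1}^{n_x} (h_i - S/n_x)^2. -/

import Mathlib

open MeasureTheory ProbabilityTheory

theorem stmt17 (nx m : ℕ) (hnx : 1 ≤ nx) (hm : 1 ≤ m) (N : ℕ) (hN : N = nx * m)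
    (Z : Fin nx × Fin m → ℝ) (hZ : ∀ ω, Z ω = 0 ∨ Z ω = 1)
    (h : Fin nx → ℕ)
    (hcount : ∀ i : Fin nx, Nat.card {j : Fin m // Z (i, j) = 1} = h i)
    (S : ℕ) (hS : S = ∑ i, h i) (hS0 : 0 < S) (hSN : S < N)
    (μ : Measure (Fin nx × Fin m)) (hμ : μ = ((N : ENNReal))⁻¹ • Measure.count) :
    variance (μ[Z | MeasurableSpace.comap Prod.fst inferInstance]) μ / variance Z μ
      = ((nx : ℝ) / ((S : ℝ) * ((N : ℝ) - (S : ℝ)))) *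
          ∑ i, ((h i : ℝ) - (S : ℝ) / (nx : ℝ)) ^ 2 := by
  classical
  have hNpos : 0 < N := lt_of_le_of_lt (Nat.zero_le S) hSN
  have hN0 : (N : ℝ) ≠ 0 := Nat.cast_ne_zero.mpr hNpos.ne'
  have hm0 : (m : ℝ) ≠ 0 := Nat.cast_ne_zero.mpr (by omega)
  have hnx0 : (nx : ℝ) ≠ 0 := Nat.cast_ne_zero.mpr (by omega)
  have hSne : (S : ℝ) ≠ 0 := Nat.cast_ne_zero.mpr hS0.ne'
  have hNSne : (N : ℝ) - (S : ℝ) ≠ 0 := by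
    have : (S : ℝ) < N := by exact_mod_cast hSN
    linarith
  have hNr : (N : ℝ) = nx * m := by exact_mod_cast congrArg (Nat.cast : ℕ → ℝ) hN
  -- measure of singletons
  have hμsingle : ∀ x : Fin nx × Fin m, μ {x} = (N : ENNReal)⁻¹ := by
    intro x
    rw [hμ, Measure.smul_apply, Measure.count_singleton, smul_eq_mul, mul_one]
  have hcard : (Fintype.card (Fin nx × Fin m)) = N := by simp [hN]
  have hprob : IsProbabilityMeasure μ := by
    constructor
    have hcu : (Measure.count : Measure (Fin nx × Fin m)) Set.univ
        = (N : ENNReal) := by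
      rw [Measure.count_apply_finite _ Set.finite_univ]
      simp [hcard]
    rw [hμ, Measure.smul_apply, hcu, smul_eq_mul,
      ENNReal.inv_mul_cancel (by exact_mod_cast Nat.cast_ne_zero.mpr hNpos.ne') (by simp)]
  -- integral formula
  have hint : ∀ f : Fin nx × Fin m → ℝ, ∫ ω, f ω ∂μ = (N : ℝ)⁻¹ * ∑ ω, f ω := by
    intro f
    rw [integral_fintype .of_finite, Finset.mul_sum]
    refine Finset.sum_congr rfl fun x _ => ?_
    rw [measureReal_def, hμsingle, smul_eq_mul]
    congr 1
    simp
  have hsint : ∀ (s : Set (Fin nx × Fin m)) (f : Fin nx × Fin m → ℝ),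
      ∫ ω in s, f ω ∂μ = (N : ℝ)⁻¹ * ∑ ω, s.indicator f ω := by
    intro s f
    rw [← integral_indicator (Set.Finite.measurableSet (Set.toFinite s))]
    exact hint _
  -- sum of Z over each bin
  have hsumZ : ∀ i : Fin nx, ∑ j, Z (i, j) = (h i : ℝ) := by
    intro i
    have hc := hcount i
    rw [Nat.card_eq_fintype_card, Fintype.card_subtype] at hc
    rw [← Finset.sum_filter_add_sum_filter_not Finset.univ (fun j => Z (i, j) = 1)]
    have h1 : ∑ j ∈ Finset.univ.filter (fun j => Z (i, j) = 1), Z (i, j)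
        = (h i : ℝ) := by
      rw [Finset.sum_congr rfl (fun j hj => (Finset.mem_filter.mp hj).2),
        Finset.sum_const, hc, nsmul_eq_mul, mul_one]
    have h2 : ∑ j ∈ Finset.univ.filter (fun j => ¬Z (i, j) = 1), Z (i, j) = 0 := by
      refine Finset.sum_eq_zero fun j hj => ?_
      rcases hZ (i, j) with h0 | h1
      · exact h0
      · exact absurd h1 (Finset.mem_filter.mp hj).2
    rw [h1, h2, add_zero]
  have hsumS : ∑ ω : Fin nx × Fin m, Z ω = (S : ℝ) := by
    rw [Fintype.sum_prod_type]
    rw [Finset.sum_congr rfl fun i _ => hsumZ i]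
    rw [hS]; push_cast; ring
  have hZsq : ∀ ω, Z ω ^ 2 = Z ω := by
    intro ω; rcases hZ ω with h0 | h0 <;> rw [h0] <;> ring
  -- the conditional expectation
  have hm'le : MeasurableSpace.comap (Prod.fst : Fin nx × Fin m → Fin nx) inferInstance
      ≤ (inferInstance : MeasurableSpace (Fin nx × Fin m)) := by
    exact measurable_fst.comap_le
  set g : Fin nx × Fin m → ℝ := fun ω => (h ω.1 : ℝ) / m with hgdef
  have hgm : Measurable[MeasurableSpace.comap (Prod.fst : Fin nx × Fin m → Fin nx) inferInstance] g := by
    have h1 : Measurable[MeasurableSpace.comap (Prod.fst : Fin nx × Fin m → Fin nx) inferInstance] (Prod.fst : Fin nx × Fin m → Fin nx) :=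
      Measurable.of_comap_le le_rfl
    exact (Measurable.of_discrete (f := fun i : Fin nx => (h i : ℝ) / m)).comp h1
  have hsumg : ∀ i : Fin nx, ∑ _j : Fin m, ((h i : ℝ) / m) = (h i : ℝ) := by
    intro i
    rw [Finset.sum_const, Finset.card_univ, Fintype.card_fin, nsmul_eq_mul]
    field_simp
  have hcond : g =ᵐ[μ] μ[Z | MeasurableSpace.comap (Prod.fst : Fin nx × Fin m → Fin nx) inferInstance] := by
    refine ae_eq_condExp_of_forall_setIntegral_eq hm'le
      (Integrable.of_finite : Integrable Z μ)
      (fun s _ _ => (Integrable.of_finite : Integrable g μ).integrableOn) ?_ ?_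
    · rintro s ⟨t, -, rfl⟩ -
      rw [hsint, hsint]
      congr 1
      rw [Fintype.sum_prod_type, Fintype.sum_prod_type]
      refine Finset.sum_congr rfl fun i _ => ?_
      by_cases hit : i ∈ t
      · have hmem : ∀ j : Fin m, ((i, j) : Fin nx × Fin m) ∈ Prod.fst ⁻¹' t :=
          fun j => hit
        rw [Finset.sum_congr rfl fun j _ => Set.indicator_of_mem (hmem j) g,
          Finset.sum_congr rfl fun j _ => Set.indicator_of_mem (hmem j) Z]
        simp only [hgdef]
        rw [hsumg i, hsumZ i]
      · have hmem : ∀ j : Fin m, ((i, j) : Fin nx × Fin m) ∉ Prod.fst ⁻¹' t :=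
          fun j => hit
        rw [Finset.sum_congr rfl fun j _ => Set.indicator_of_notMem (hmem j) g,
          Finset.sum_congr rfl fun j _ => Set.indicator_of_notMem (hmem j) Z]
    · exact StronglyMeasurable.aestronglyMeasurable
        (Measurable.stronglyMeasurable hgm)
  -- variance is invariant under a.e. equality
  have hvcongr : variance (μ[Z | MeasurableSpace.comap (Prod.fst : Fin nx × Fin m → Fin nx) inferInstance]) μ = variance g μ := by
    have h1 : μ[g] = ∫ ω, (μ[Z | MeasurableSpace.comap (Prod.fst : Fin nx × Fin m → Fin nx) inferInstance]) ω ∂μ := integral_congr_ae hcond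
    unfold ProbabilityTheory.variance ProbabilityTheory.evariance
    congr 1
    refine lintegral_congr_ae ?_
    filter_upwards [hcond] with ω hω
    rw [hω, h1]
  -- compute means
  have hmeanZ : μ[Z] = (S : ℝ) / N := by
    rw [hint, hsumS]; ring
  have hmeang : μ[g] = (S : ℝ) / N := by
    rw [hint, Fintype.sum_prod_type]
    simp only [hgdef]
    rw [Finset.sum_congr rfl fun i _ => hsumg i]
    rw [hS]; push_cast; ring
  have hT : ∑ ω : Fin nx × Fin m, g ω ^ 2 = (∑ i, (h i : ℝ) ^ 2) / m := by
    rw [Fintype.sum_prod_type]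
    rw [Finset.sum_div]
    refine Finset.sum_congr rfl fun i _ => ?_
    simp only [hgdef]
    rw [Finset.sum_const, Finset.card_univ, Fintype.card_fin, nsmul_eq_mul]
    field_simp
  -- variances
  have hvarZ : variance Z μ = (S : ℝ) / N - ((S : ℝ) / N) ^ 2 := by
    rw [variance_eq_sub (MemLp.of_discrete), hmeanZ]
    congr 1
    rw [show (Z ^ 2 : Fin nx × Fin m → ℝ) = fun ω => Z ω ^ 2 from rfl] at *
    rw [hint fun ω => Z ω ^ 2]
    rw [Finset.sum_congr rfl fun ω _ => hZsq ω, hsumS]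
    ring
  have hvarg : variance g μ
      = (N : ℝ)⁻¹ * ((∑ i, (h i : ℝ) ^ 2) / m) - ((S : ℝ) / N) ^ 2 := by
    rw [variance_eq_sub (MemLp.of_discrete), hmeang]
    congr 1
    rw [show (g ^ 2 : Fin nx × Fin m → ℝ) = fun ω => g ω ^ 2 from rfl]
    rw [hint fun ω => g ω ^ 2, hT]
  -- the sum on the RHS
  have hsumrhs : ∑ i, ((h i : ℝ) - (S : ℝ) / nx) ^ 2
      = (∑ i, (h i : ℝ) ^ 2) - (S : ℝ) ^ 2 / nx := by
    have hhS : ∑ i, (h i : ℝ) = (S : ℝ) := by rw [hS]; push_cast; ring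
    have : ∀ i, ((h i : ℝ) - (S : ℝ) / nx) ^ 2
        = (h i : ℝ) ^ 2 - 2 * ((S : ℝ) / nx) * (h i : ℝ) + ((S : ℝ) / nx) ^ 2 := by
      intro i; ring
    rw [Finset.sum_congr rfl fun i _ => this i]
    rw [Finset.sum_add_distrib, Finset.sum_sub_distrib, ← Finset.mul_sum, hhS,
      Finset.sum_const, Finset.card_univ, Fintype.card_fin, nsmul_eq_mul]
    field_simp
    ring
  -- put everything together
  rw [hvcongr, hvarg, hvarZ, hsumrhs]
  have hvarZne : (S : ℝ) / N - ((S : ℝ) / N) ^ 2 ≠ 0 := by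
    have : (S : ℝ) / N - ((S : ℝ) / N) ^ 2 = (S : ℝ) * ((N : ℝ) - S) / N ^ 2 := by
      field_simp
    rw [this]
    positivity
  rw [div_mul_eq_mul_div, div_eq_div_iff hvarZne (mul_ne_zero hSne hNSne), hNr]
  field_simp
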